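/- arXiv:1704.03145 — 2 statements merged into one kernel-verified Lean document; each statement's English description precedes it below -/
import Mathlib

section
/- Let α be a simple zero of A(·)² − λ², and for x near α let x̂ − α = e^{−2πi}(x − α) denote rotation by −2π around α, interpreted via analytic continuation of the branches. If A(α) = λ then H(x) = −iH(x̂), and if A(α) = −λ then H(x) = iH(x̂); consequently Q(x) = ±iQ(x̂)·σ in the respective cases A(α) = ±λ, where σ = [[0,1],[1,0]], and the exact WKB solution with phase base point α and series base point x₂ satisfies u⁺(x,h;α,x₂) = ±i·u⁻(x̂,h;α,x̂₂). -/
/-!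
STATEMENT 10 (Lemma on the rotated branch of `H` and the solutions).

Let `α` be a simple zero of `A(·)² - λ²` and let `x̂ - α = e^{-2πi}(x - α)` denote the
rotation by `-2π` around `α` (analytic continuation of the branches). If `A(α) = λ`
then `H(x) = -i H(x̂)` (i.e. `H(x̂) = i H(x)`), and if `A(α) = -λ` then `H(x) = i H(x̂)`
(i.e. `H(x̂) = -i H(x)`). Consequently `Q(x) = ±i Q(x̂) σ` with `σ = [[0,1],[1,0]]`, and
the exact WKB solutions satisfy `u⁺(x,h;α,x₂) = ±i u⁻(x̂,h;α,x̂₂)` in the respective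
cases `A(α) = ±λ`.

The value `H(x̂)` is encoded as the endpoint of a continuous lift of the defining
equation of `H` along the loop `t ↦ α + e^{-2πit}(x - α)`; the rotated solution
`u⁻(x̂,h;α,x̂₂)` is the `u⁻`-solution built from the rotated data: phase `-z`,
branch `Ĥ`, and the `-`-series of the rotated branch (`sq` replaced by `-sq`).
-/

open Complex Set

noncomputable section

/-- `(we, wo)` is the pair of summed exact WKB series with sign `s = ±1` and base
point `x₀`. -/
def IsWKBSum (Ω : Set ℂ) (h : ℝ) (s : ℂ) (sq H : ℂ → ℂ) (x₀ : ℂ) (we wo : ℂ → ℂ) : Prop :=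
  we x₀ = 1 ∧ wo x₀ = 0 ∧ ∀ x ∈ Ω,
    HasDerivAt we (deriv H x / H x * wo x) x ∧
    HasDerivAt wo (deriv H x / H x * we x - s * (2 * sq x / (h : ℂ)) * wo x) x

/-- The exact WKB solution `u⁺`, componentwise. -/
def wkbPlus (h : ℝ) (Z H we wo : ℂ → ℂ) (x : ℂ) : ℂ × ℂ :=
  (Complex.exp (Z x / (h : ℂ)) *
      ((H x)⁻¹ * (wo x + we x) + Complex.I * H x * (wo x - we x)),
   Complex.exp (Z x / (h : ℂ)) *
      (-Complex.I * (H x)⁻¹ * (wo x + we x) - H x * (wo x - we x)))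

/-- The exact WKB solution `u⁻`, componentwise. -/
def wkbMinus (h : ℝ) (Z H we wo : ℂ → ℂ) (x : ℂ) : ℂ × ℂ :=
  (Complex.exp (-Z x / (h : ℂ)) *
      ((H x)⁻¹ * (we x + wo x) + Complex.I * H x * (we x - wo x)),
   Complex.exp (-Z x / (h : ℂ)) *
      (-Complex.I * (H x)⁻¹ * (we x + wo x) - H x * (we x - wo x)))

/-- The matrix `Q(x) = [[H⁻¹, H⁻¹],[iH, -iH]]` (as a function of the value `H(x)`). -/
def qMat (Hx : ℂ) : Matrix (Fin 2) (Fin 2) ℂ :=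
  !![Hx⁻¹, Hx⁻¹; Complex.I * Hx, -Complex.I * Hx]

/-- The matrix `σ = [[0,1],[1,0]]`. -/
def sigmaMat : Matrix (Fin 2) (Fin 2) ℂ := !![0, 1; 1, 0]

/-! ### Auxiliary lemmas -/

section AuxLemmas
open MeasureTheory intervalIntegral


lemma fourthRoots {w : ℂ} (h : w ^ 4 = 1) : w = 1 ∨ w = -1 ∨ w = I ∨ w = -I := by
  have h' : (w - 1) * (w + 1) * (w - I) * (w + I) = 0 := by
    linear_combination h + (1 - w ^ 2) * Complex.I_sq
  rcases mul_eq_zero.1 h' with h1 | h1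
  · rcases mul_eq_zero.1 h1 with h2 | h2
    · rcases mul_eq_zero.1 h2 with h3 | h3
      · exact Or.inl (by linear_combination h3)
      · exact Or.inr (Or.inl (by linear_combination h3))
    · exact Or.inr (Or.inr (Or.inl (by linear_combination h2)))
  · exact Or.inr (Or.inr (Or.inr (by linear_combination h1)))

lemma fourthRoots_finite : ({w : ℂ | w ^ 4 = 1}).Finite := by
  apply Set.Finite.subset
    (((Set.finite_singleton (-I)).insert I |>.insert (-1) |>.insert 1))
  intro w hw
  rcases fourthRoots hw with h | h | h | h <;> simp [h]

/-- A continuous function on `[0,1]` with values in the 4th roots of unity is constant. -/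
lemma fourthRoots_path_const {ρ : ℝ → ℂ} (hc : ContinuousOn ρ (Icc 0 1))
    (h4 : ∀ t ∈ Icc (0:ℝ) 1, ρ t ^ 4 = 1) : ρ 1 = ρ 0 := by
  haveI : PreconnectedSpace (Icc (0:ℝ) 1) := Subtype.preconnectedSpace isPreconnected_Icc
  set X := Icc (0:ℝ) 1
  have h0 : (0:ℝ) ∈ X := by constructor <;> norm_num
  have h1 : (1:ℝ) ∈ X := by constructor <;> norm_num
  set f : X → ℂ := fun t => ρ t with hf
  have hfc : Continuous f := continuousOn_iff_continuous_restrict.1 hc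
  set T : Set ℂ := {w : ℂ | w ^ 4 = 1} \ {ρ 0} with hT
  have hTclosed : IsClosed T := (fourthRoots_finite.subset diff_subset).isClosed
  have hkey : f ⁻¹' {ρ 0} = f ⁻¹' Tᶜ := by
    ext t
    simp only [mem_preimage, mem_singleton_iff, mem_compl_iff, hT, mem_diff,
      mem_setOf_eq, not_and, not_not]
    constructor
    · intro h h'; exact h
    · intro h; exact h (h4 t t.2)
  have hclopen : IsClopen (f ⁻¹' {ρ 0}) := by
    constructor
    · exact isClosed_singleton.preimage hfc
    · rw [hkey]; exact (hTclosed.isOpen_compl).preimage hfc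
  have huniv : f ⁻¹' {ρ 0} = univ :=
    hclopen.eq_univ ⟨⟨0, h0⟩, by simp [f]⟩
  have := huniv ▸ (mem_univ (⟨1, h1⟩ : X))
  simpa [f] using this

/-- A nonvanishing holomorphic function on a ball admits a continuous logarithm. -/
lemma exists_log_on_ball {c : ℂ} {R : ℝ} {f : ℂ → ℂ}
    (hf : DifferentiableOn ℂ f (Metric.ball c R))
    (h0 : ∀ y ∈ Metric.ball c R, f y ≠ 0) :
    ∃ L : ℂ → ℂ, ContinuousOn L (Metric.ball c R) ∧
      ∀ y ∈ Metric.ball c R, Complex.exp (L y) = f y := by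
  rcases le_or_gt R 0 with hR | hR
  · exact ⟨0, continuousOn_const, by simp [Metric.ball_eq_empty.2 hR]⟩
  set W := Metric.ball c R with hW
  have hWo : IsOpen W := Metric.isOpen_ball
  have hcW : c ∈ W := Metric.mem_ball_self hR
  have hWconv : Convex ℝ W := convex_ball c R
  have hfa : AnalyticOnNhd ℂ f W := hf.analyticOnNhd hWo
  set q : ℂ → ℂ := fun y => deriv f y / f y with hqdef
  have hqc : ContinuousOn q W := (hfa.deriv.continuousOn).div hf.continuousOn h0
  -- the segment from `c` to `y` stays in `W`
  have hseg : ∀ y ∈ W, ∀ s : ℝ, s ∈ Icc (0:ℝ) 1 → c + (s : ℂ) * (y - c) ∈ W := by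
    intro y hy s hs
    have : c + (s : ℂ) * (y - c) = (1 - s) • c + s • y := by
      push_cast [Complex.real_smul]; ring
    rw [this]
    exact hWconv hcW hy (by linarith [hs.2]) hs.1 (by ring)
  refine ⟨fun y => Complex.log (f c) + (y - c) * ∫ s in (0:ℝ)..1, q (c + (s:ℂ) * (y - c)),
    ?_, ?_⟩
  · -- continuity
    have key : ∀ y₀ ∈ W, ContinuousAt
        (fun y => ∫ s in Ioc (0:ℝ) 1, q (c + (s:ℂ) * (y - c))) y₀ := by
      intro y₀ hy₀
      obtain ⟨δ, hδpos, hδ⟩ : ∃ δ > 0, Metric.closedBall y₀ δ ⊆ W := by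
        obtain ⟨ε, hεpos, hε⟩ := Metric.isOpen_iff.1 hWo y₀ hy₀
        exact ⟨ε / 2, by positivity,
          (Metric.closedBall_subset_ball (by linarith)).trans hε⟩
      set K : Set ℂ :=
        (fun p : ℂ × ℝ => c + (p.2 : ℂ) * (p.1 - c)) '' (Metric.closedBall y₀ δ ×ˢ Icc 0 1)
        with hK
      have hKcomp : IsCompact K :=
        ((isCompact_closedBall y₀ δ).prod isCompact_Icc).image (by continuity)
      have hKW : K ⊆ W := by
        rintro - ⟨⟨y, s⟩, ⟨hy, hs⟩, rfl⟩
        exact hseg y (hδ hy) s hs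
      obtain ⟨M, hM⟩ := hKcomp.exists_bound_of_continuousOn (hqc.mono hKW)
      apply continuousAt_of_dominated (bound := fun _ => M)
      · filter_upwards [Metric.closedBall_mem_nhds y₀ hδpos] with y hy
        apply (hqc.comp (by fun_prop) ?_).aestronglyMeasurable measurableSet_Ioc
        intro s hs
        exact hseg y (hδ hy) s (Ioc_subset_Icc_self hs)
      · filter_upwards [Metric.closedBall_mem_nhds y₀ hδpos] with y hy
        filter_upwards [ae_restrict_mem measurableSet_Ioc] with s hs
        exact hM _ ⟨⟨y, s⟩, ⟨hy, Ioc_subset_Icc_self hs⟩, rfl⟩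
      · exact integrable_const M
      · filter_upwards [ae_restrict_mem measurableSet_Ioc] with s hs
        have hmem : c + (s:ℂ) * (y₀ - c) ∈ W := hseg y₀ hy₀ s (Ioc_subset_Icc_self hs)
        have hinner : ContinuousAt (fun x : ℂ => c + (s : ℂ) * (x - c)) y₀ := by fun_prop
        exact ContinuousAt.comp (f := fun x : ℂ => c + (s : ℂ) * (x - c))
          (hqc.continuousAt (hWo.mem_nhds hmem)) hinner
    intro y₀ hy₀
    have : ContinuousAt (fun y =>
        Complex.log (f c) + (y - c) * ∫ s in (0:ℝ)..1, q (c + (s:ℂ) * (y - c))) y₀ := by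
      have heq : (fun y => (∫ s in (0:ℝ)..1, q (c + (s:ℂ) * (y - c)))) =
          (fun y => ∫ s in Ioc (0:ℝ) 1, q (c + (s:ℂ) * (y - c))) := by
        funext y; exact intervalIntegral.integral_of_le zero_le_one
      apply continuousAt_const.add
      apply (continuousAt_id.sub continuousAt_const).mul
      rw [heq]; exact key y₀ hy₀
    exact this.continuousWithinAt
  · -- the exponential identity
    intro y hy
    show Complex.exp (Complex.log (f c) + (y - c) * ∫ s in (0:ℝ)..1,
      q (c + (s:ℂ) * (y - c))) = f y
    by_cases hyc : y = c
    · subst hyc; simp [Complex.exp_log (h0 y hy)]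
    -- the path parametrization extends a bit beyond `[0,1]`
    set d : ℝ := dist y c with hd
    have hdpos : 0 < d := dist_pos.2 hyc
    have hdR : d < R := Metric.mem_ball.1 hy
    set ε : ℝ := (R - d) / (2 * d) with hε
    have hRd : 0 < R - d := by linarith
    have hεpos : 0 < ε := by positivity
    set J : Set ℝ := Ioo (-ε) (1 + ε) with hJ
    have hJo : IsOpen J := isOpen_Ioo
    have hIccJ : Icc (0:ℝ) 1 ⊆ J := fun s hs => ⟨by linarith [hs.1], by linarith [hs.2]⟩
    set g : ℝ → ℂ := fun s => c + (s : ℂ) * (y - c) with hg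
    have hgW : ∀ s ∈ J, g s ∈ W := by
      intro s hs
      have habs : dist (g s) c = |s| * d := by
        rw [hg, hd, Complex.dist_eq, Complex.dist_eq]
        have he : c + (s:ℂ) * (y - c) - c = (s:ℂ) * (y - c) := by ring
        rw [he, norm_mul, Complex.norm_real, Real.norm_eq_abs]
      have hsabs : |s| ≤ 1 + ε := by
        rw [abs_le]; constructor
        · nlinarith [hs.1]
        · linarith [hs.2]
      have hεd : ε * (2 * d) = R - d := by rw [hε]; field_simp
      have hlt : (1 + ε) * d < R := by nlinarith
      rw [Metric.mem_ball]
      calc dist (g s) c = |s| * d := habs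
        _ ≤ (1 + ε) * d := by nlinarith
        _ < R := hlt
    have hqgc : ContinuousOn (q ∘ g) J := hqc.comp (by fun_prop) hgW
    -- FTC for `I s = ∫_0^s q (g u) du`
    set Iq : ℝ → ℂ := fun s => ∫ u in (0:ℝ)..s, q (g u) with hIq
    have hInt : ∀ s ∈ J, IntervalIntegrable (q ∘ g) volume 0 s := by
      intro s hs
      apply ContinuousOn.intervalIntegrable
      apply hqgc.mono
      intro u hu
      rcases le_total 0 s with h | h
      · rw [uIcc_of_le h] at hu
        exact ⟨lt_of_lt_of_le (neg_lt_zero.2 hεpos) hu.1, lt_of_le_of_lt hu.2 hs.2⟩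
      · rw [uIcc_of_ge h] at hu
        exact ⟨lt_of_lt_of_le hs.1 hu.1, lt_of_le_of_lt hu.2 (by linarith [hεpos])⟩
    have hIderiv : ∀ s ∈ J, HasDerivAt Iq (q (g s)) s := by
      intro s hs
      have hca : ContinuousAt (q ∘ g) s := hqgc.continuousAt (hJo.mem_nhds hs)
      exact intervalIntegral.integral_hasDerivAt_right (hInt s hs)
        (hqgc.stronglyMeasurableAtFilter hJo s hs) hca
    -- the auxiliary function `φ` is constant
    set φ : ℝ → ℂ := fun s => Complex.exp (-(y - c) * Iq s) * f (g s) with hφ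
    have hφderiv : ∀ s ∈ Icc (0:ℝ) 1, HasDerivWithinAt φ 0 (Icc (0:ℝ) 1) s := by
      intro s hs
      have hsJ : s ∈ J := hIccJ hs
      have hgs : g s ∈ W := hgW s hsJ
      have hgd : HasDerivAt g (y - c) s := by
        have h1 : HasDerivAt (fun s : ℝ => (s : ℂ)) 1 s := (hasDerivAt_id s).ofReal_comp
        simpa [hg] using (h1.mul_const (y - c)).const_add c
      have hfd : HasDerivAt (fun s : ℝ => f (g s)) ((y - c) * deriv f (g s)) s := by
        have hfc : HasDerivAt f (deriv f (g s)) (g s) :=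
          (hf.differentiableAt (hWo.mem_nhds hgs)).hasDerivAt
        have := (hfc.hasFDerivAt.restrictScalars ℝ).comp_hasDerivAt s hgd.hasFDerivAt.hasDerivAt
        simpa [smul_eq_mul, mul_comm, Function.comp_def] using this
      have hed : HasDerivAt (fun s => Complex.exp (-(y - c) * Iq s))
          (Complex.exp (-(y - c) * Iq s) * (-(y - c) * q (g s))) s :=
        (((hIderiv s hsJ).const_mul (-(y - c)))).cexp
      have := (hed.mul hfd)
      have hzero : Complex.exp (-(y - c) * Iq s) * (-(y - c) * q (g s)) * f (g s) +
          Complex.exp (-(y - c) * Iq s) * ((y - c) * deriv f (g s)) = 0 := by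
        have hq : q (g s) * f (g s) = deriv f (g s) := div_mul_cancel₀ _ (h0 _ hgs)
        linear_combination (-(Complex.exp (-(y - c) * Iq s) * (y - c))) * hq
      rw [hzero] at this
      exact this.hasDerivWithinAt
    have hφconst : φ 1 = φ 0 := by
      have hle : ‖φ 1 - φ 0‖ ≤ 0 * ‖(1:ℝ) - 0‖ :=
        Convex.norm_image_sub_le_of_norm_hasDerivWithin_le
          (fun s hs => hφderiv s hs) (fun s _ => by simp) (convex_Icc (0:ℝ) 1)
          (left_mem_Icc.2 zero_le_one) (right_mem_Icc.2 zero_le_one)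
      have : ‖φ 1 - φ 0‖ = 0 := le_antisymm (by simpa using hle) (norm_nonneg _)
      exact sub_eq_zero.1 (norm_eq_zero.1 this)
    have hg1 : g 1 = y := by rw [hg]; push_cast; ring
    have hφ0 : φ 0 = f c := by
      simp [hφ, hIq, hg, intervalIntegral.integral_same]
    have h1 : Complex.exp (-(y - c) * Iq 1) * f y = f c := by
      have := hφconst
      rw [hφ0] at this
      simpa [hφ, hg1] using this
    have hI1 : (∫ s in (0:ℝ)..1, q (c + (s:ℂ) * (y - c))) = Iq 1 := rfl
    rw [hI1, Complex.exp_add, Complex.exp_log (h0 c hcW)]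
    have hmul : Complex.exp ((y - c) * Iq 1) * Complex.exp (-(y - c) * Iq 1) = 1 := by
      rw [← Complex.exp_add, show (y - c) * Iq 1 + -(y - c) * Iq 1 = 0 by ring,
        Complex.exp_zero]
    linear_combination (-(Complex.exp ((y - c) * Iq 1))) * h1 + f y * hmul

/-- Uniqueness for the first-order linear system with locally bounded coefficients. -/
lemma ode_zero (Ω : Set ℂ) (hΩopen : IsOpen Ω) (hΩconn : IsPreconnected Ω)
    (cf e : ℂ → ℂ) (b : ℂ → ℝ) (hb : ContinuousOn b Ω)
    (hcb : ∀ x ∈ Ω, ‖cf x‖ ≤ b x) (heb : ∀ x ∈ Ω, ‖e x‖ ≤ b x)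
    (u v : ℂ → ℂ)
    (hu : ∀ x ∈ Ω, HasDerivAt u (cf x * v x) x)
    (hv : ∀ x ∈ Ω, HasDerivAt v (cf x * u x - e x * v x) x)
    (x₂ : ℂ) (hx₂ : x₂ ∈ Ω) (hu0 : u x₂ = 0) (hv0 : v x₂ = 0) :
    ∀ x ∈ Ω, u x = 0 ∧ v x = 0 := by
  set S : Set ℂ := {x ∈ Ω | u x = 0 ∧ v x = 0} with hS
  have hucont : ∀ x ∈ Ω, ContinuousAt u x := fun x hx => (hu x hx).differentiableAt.continuousAt
  have hvcont : ∀ x ∈ Ω, ContinuousAt v x := fun x hx => (hv x hx).differentiableAt.continuousAt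
  -- S is open
  have hSopen : IsOpen S := by
    rw [isOpen_iff_mem_nhds]
    rintro x₀ ⟨hx₀Ω, hux₀, hvx₀⟩
    obtain ⟨δ, hδpos, hδ⟩ : ∃ δ > 0, Metric.closedBall x₀ δ ⊆ Ω := by
      obtain ⟨ε, hεpos, hε⟩ := Metric.isOpen_iff.1 hΩopen x₀ hx₀Ω
      exact ⟨ε / 2, by positivity, (Metric.closedBall_subset_ball (by linarith)).trans hε⟩
    obtain ⟨M, hM'⟩ := (isCompact_closedBall x₀ δ).exists_bound_of_continuousOn (hb.mono hδ)
    have hM : ∀ x ∈ Metric.closedBall x₀ δ, b x ≤ M := fun x hx =>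
      (le_abs_self _).trans ((Real.norm_eq_abs _) ▸ hM' x hx)
    have hM0 : 0 ≤ M := le_trans (norm_nonneg _) ((hcb x₀ hx₀Ω).trans (hM x₀ (Metric.mem_closedBall_self hδpos.le)))
    set r : ℝ := min δ (1 / (3 * M + 1)) with hr
    have hrpos : 0 < r := lt_min hδpos (by positivity)
    have hrδ : r ≤ δ := min_le_left _ _
    have hrM : 3 * M * r < 1 := by
      have h2 : r ≤ 1 / (3 * M + 1) := min_le_right _ _
      have h3 : 0 < 3 * M + 1 := by linarith
      calc 3 * M * r ≤ 3 * M * (1 / (3 * M + 1)) := by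
            apply mul_le_mul_of_nonneg_left h2 (by linarith)
        _ < 1 := by rw [mul_one_div, div_lt_one h3]; linarith
    set K : Set ℂ := Metric.closedBall x₀ r with hK
    have hKΩ : K ⊆ Ω := (Metric.closedBall_subset_closedBall hrδ).trans hδ
    have hKconv : Convex ℝ K := convex_closedBall x₀ r
    -- the max of ‖u‖ + ‖v‖ on K
    have hgc : ContinuousOn (fun x => ‖u x‖ + ‖v x‖) K := by
      apply ContinuousOn.add
      · exact fun x hx => ((hucont x (hKΩ hx)).norm).continuousWithinAt
      · exact fun x hx => ((hvcont x (hKΩ hx)).norm).continuousWithinAt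
    obtain ⟨z, hzK, hzmax⟩ := (isCompact_closedBall x₀ r).exists_isMaxOn
      ⟨x₀, Metric.mem_closedBall_self hrpos.le⟩ hgc
    set m : ℝ := ‖u z‖ + ‖v z‖ with hm
    have hm0 : 0 ≤ m := by positivity
    have hbound : ∀ x ∈ K, ‖u x‖ + ‖v x‖ ≤ m := fun x hx => hzmax hx
    -- derivative bounds on K
    have hubd : ∀ x ∈ K, ‖cf x * v x‖ ≤ M * m := by
      intro x hx
      rw [norm_mul]
      have h1 : ‖cf x‖ ≤ M := (hcb x (hKΩ hx)).trans
        (hM x (Metric.closedBall_subset_closedBall hrδ hx))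
      have h2 : ‖v x‖ ≤ m := le_trans (le_add_of_nonneg_left (norm_nonneg _)) (hbound x hx)
      exact mul_le_mul h1 h2 (norm_nonneg _) (le_trans (norm_nonneg _) h1)
    have hvbd : ∀ x ∈ K, ‖cf x * u x - e x * v x‖ ≤ 2 * (M * m) := by
      intro x hx
      have h1 : ‖cf x‖ ≤ M := (hcb x (hKΩ hx)).trans
        (hM x (Metric.closedBall_subset_closedBall hrδ hx))
      have h1' : ‖e x‖ ≤ M := (heb x (hKΩ hx)).trans
        (hM x (Metric.closedBall_subset_closedBall hrδ hx))
      have h2 : ‖u x‖ ≤ m := le_trans (le_add_of_nonneg_right (norm_nonneg _)) (hbound x hx)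
      have h3 : ‖v x‖ ≤ m := le_trans (le_add_of_nonneg_left (norm_nonneg _)) (hbound x hx)
      calc ‖cf x * u x - e x * v x‖ ≤ ‖cf x * u x‖ + ‖e x * v x‖ := norm_sub_le _ _
        _ ≤ M * m + M * m := add_le_add
            (by rw [norm_mul];
                exact mul_le_mul h1 h2 (norm_nonneg _) ((norm_nonneg _).trans h1))
            (by rw [norm_mul];
                exact mul_le_mul h1' h3 (norm_nonneg _) ((norm_nonneg _).trans h1'))
        _ = 2 * (M * m) := by ring
    -- mean value estimates
    have humv : ∀ x ∈ K, ‖u x‖ ≤ M * m * r := by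
      intro x hx
      have := hKconv.norm_image_sub_le_of_norm_hasDerivWithin_le
        (fun y hy => ((hu y (hKΩ hy)).hasDerivWithinAt)) hubd
        (Metric.mem_closedBall_self hrpos.le) hx
      rw [hux₀, sub_zero] at this
      calc ‖u x‖ ≤ M * m * ‖x - x₀‖ := this
        _ ≤ M * m * r := by
            apply mul_le_mul_of_nonneg_left _ (by positivity)
            rw [← dist_eq_norm]; exact Metric.mem_closedBall.1 hx
    have hvmv : ∀ x ∈ K, ‖v x‖ ≤ 2 * (M * m) * r := by
      intro x hx
      have := hKconv.norm_image_sub_le_of_norm_hasDerivWithin_le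
        (fun y hy => ((hv y (hKΩ hy)).hasDerivWithinAt)) hvbd
        (Metric.mem_closedBall_self hrpos.le) hx
      rw [hvx₀, sub_zero] at this
      calc ‖v x‖ ≤ 2 * (M * m) * ‖x - x₀‖ := this
        _ ≤ 2 * (M * m) * r := by
            apply mul_le_mul_of_nonneg_left _ (by positivity)
            rw [← dist_eq_norm]; exact Metric.mem_closedBall.1 hx
    -- conclude m = 0
    have hm_le : m ≤ 3 * M * r * m := by
      have := add_le_add (humv z hzK) (hvmv z hzK)
      calc m = ‖u z‖ + ‖v z‖ := rfl
        _ ≤ M * m * r + 2 * (M * m) * r := this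
        _ = 3 * M * r * m := by ring
    have hmzero : m = 0 := by nlinarith
    have hKzero : ∀ x ∈ K, u x = 0 ∧ v x = 0 := by
      intro x hx
      have h1 : ‖u x‖ + ‖v x‖ ≤ 0 := hmzero ▸ hbound x hx
      have h2 : ‖u x‖ = 0 := by nlinarith [norm_nonneg (u x), norm_nonneg (v x)]
      have h3 : ‖v x‖ = 0 := by nlinarith [norm_nonneg (u x), norm_nonneg (v x)]
      exact ⟨norm_eq_zero.1 h2, norm_eq_zero.1 h3⟩
    have : Metric.ball x₀ r ∈ nhds x₀ := Metric.ball_mem_nhds x₀ hrpos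
    apply Filter.mem_of_superset this
    intro x hx
    exact ⟨hδ (Metric.closedBall_subset_closedBall hrδ (Metric.ball_subset_closedBall hx)),
      hKzero x (Metric.ball_subset_closedBall hx)⟩
  -- S is relatively closed via continuity, use preconnectedness
  have hSx₂ : x₂ ∈ S := ⟨hx₂, hu0, hv0⟩
  have hclosval : ∀ x ∈ Ω, x ∈ closure S → u x = 0 ∧ v x = 0 := by
    intro x hx hxc
    have key : ∀ f : ℂ → ℂ, (∀ y ∈ S, f y = 0) → ContinuousAt f x → f x = 0 := by
      intro f hf hfc
      have h1 : f x ∈ closure (f '' S) := (hfc.continuousWithinAt).mem_closure_image hxc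
      have h2 : f '' S ⊆ {0} := by rintro - ⟨y, hy, rfl⟩; simp [hf y hy]
      have h3 := (closure_mono h2) h1
      simpa using h3
    exact ⟨key u (fun y hy => hy.2.1) (hucont x hx),
      key v (fun y hy => hy.2.2) (hvcont x hx)⟩
  have hsub : Ω ⊆ S := by
    have hdisj : Disjoint S (closure S)ᶜ :=
      Set.disjoint_left.2 fun x hx hx' => hx' (subset_closure hx)
    have hcover : Ω ⊆ S ∪ (closure S)ᶜ := by
      intro x hx
      by_cases hxc : x ∈ closure S
      · exact Or.inl ⟨hx, hclosval x hx hxc⟩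
      · exact Or.inr hxc
    exact IsPreconnected.subset_left_of_subset_union hSopen
      (isOpen_compl_iff.2 isClosed_closure) hdisj hcover ⟨x₂, hx₂, hSx₂⟩ hΩconn
  intro x hx
  exact (hsub hx).2

lemma qmat_rot_aux (Hx : ℂ) :
    (!![Hx⁻¹, Hx⁻¹; Complex.I * Hx, -Complex.I * Hx] : Matrix (Fin 2) (Fin 2) ℂ)
      = Complex.I • ((!![(Complex.I * Hx)⁻¹, (Complex.I * Hx)⁻¹;
          Complex.I * (Complex.I * Hx), -Complex.I * (Complex.I * Hx)]) * !![0,1;1,0]) := by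
  ext i j
  fin_cases i <;> fin_cases j <;>
    simp [Matrix.mul_apply, Fin.sum_univ_two, mul_inv, Complex.inv_I, inv_neg]
  all_goals first
    | rfl
    | linear_combination (Complex.I * Hx) * Complex.I_sq
    | linear_combination (-(Complex.I * Hx)) * Complex.I_sq
    | linear_combination Hx⁻¹ * Complex.I_sq

lemma qmat_rot_aux2 (Hx : ℂ) :
    (!![Hx⁻¹, Hx⁻¹; Complex.I * Hx, -Complex.I * Hx] : Matrix (Fin 2) (Fin 2) ℂ)
      = (-Complex.I) • ((!![(-Complex.I * Hx)⁻¹, (-Complex.I * Hx)⁻¹;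
          Complex.I * (-Complex.I * Hx), -Complex.I * (-Complex.I * Hx)]) * !![0,1;1,0]) := by
  ext i j
  fin_cases i <;> fin_cases j <;>
    simp [Matrix.mul_apply, Fin.sum_univ_two, mul_inv, Complex.inv_I, inv_neg]
  all_goals first
    | rfl
    | linear_combination (Complex.I * Hx) * Complex.I_sq
    | linear_combination (-(Complex.I * Hx)) * Complex.I_sq
    | linear_combination Hx⁻¹ * Complex.I_sq

lemma wkb_alg_fst (E Hx a b : ℂ) :
    E * (Hx⁻¹ * (b + a) + Complex.I * Hx * (b - a))
      = Complex.I * (E * ((Complex.I * Hx)⁻¹ * (a + b)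
          + Complex.I * (Complex.I * Hx) * (a - b))) := by
  rw [mul_inv, Complex.inv_I]
  linear_combination (E * Hx⁻¹ * (a + b) + E * Hx * Complex.I * (b - a)) * Complex.I_sq

lemma wkb_alg_snd (E Hx a b : ℂ) :
    E * (-Complex.I * Hx⁻¹ * (b + a) - Hx * (b - a))
      = Complex.I * (E * (-Complex.I * (Complex.I * Hx)⁻¹ * (a + b)
          - (Complex.I * Hx) * (a - b))) := by
  rw [mul_inv, Complex.inv_I]
  linear_combination (-E * Complex.I * Hx⁻¹ * (a + b) - E * Hx * (b - a)) * Complex.I_sq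

lemma wkb_alg_fst' (E Hx a b : ℂ) :
    E * (Hx⁻¹ * (b + a) + Complex.I * Hx * (b - a))
      = -Complex.I * (E * ((-Complex.I * Hx)⁻¹ * (a + b)
          + Complex.I * (-Complex.I * Hx) * (a - b))) := by
  rw [neg_mul, mul_inv, inv_neg, Complex.inv_I]
  linear_combination (E * Hx⁻¹ * (a + b) + E * Hx * Complex.I * (b - a)) * Complex.I_sq

lemma wkb_alg_snd' (E Hx a b : ℂ) :
    E * (-Complex.I * Hx⁻¹ * (b + a) - Hx * (b - a))
      = -Complex.I * (E * (-Complex.I * (-Complex.I * Hx)⁻¹ * (a + b)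
          - (-Complex.I * Hx) * (a - b))) := by
  rw [neg_mul, mul_inv, inv_neg, Complex.inv_I]
  linear_combination (-E * Complex.I * Hx⁻¹ * (a + b) - E * Hx * (b - a)) * Complex.I_sq

end AuxLemmas

theorem rotation_of_H_Q_and_solutions
    (A : ℂ → ℂ) (lam α : ℂ) (U : Set ℂ) (hU : U ∈ nhds α) (hUopen : IsOpen U)
    (hA : AnalyticOnNhd ℂ A U)
    (hzero : A α ^ 2 = lam ^ 2) (hsimple : A α * deriv A α ≠ 0)
    (hnv : ∀ x ∈ U, x ≠ α → A x ^ 2 - lam ^ 2 ≠ 0)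
    (Ω : Set ℂ) (hΩU : Ω ⊆ U) (hΩopen : IsOpen Ω) (hΩconn : IsPreconnected Ω)
    (hαΩ : α ∉ Ω)
    (sq H : ℂ → ℂ) (hsqc : ContinuousOn sq Ω)
    (hsq : ∀ x ∈ Ω, sq x ^ 2 = A x ^ 2 - lam ^ 2)
    (hH : ∀ x ∈ Ω, H x ≠ 0 ∧ (H x) ^ 4 = (A x + lam) / (A x - lam))
    -- the phase `z(·;α)`
    (Z : ℂ → ℂ) (hZ : ∀ x ∈ Ω, HasDerivAt Z (sq x) x) :
    -- (1) the continuation of `H` along the loop of winding `-1` around `α`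
    --     is `iH` if `A(α) = λ`, and `-iH` if `A(α) = -λ`
    (∀ x ∈ Ω, x ≠ α → Metric.closedBall α (dist x α) ⊆ U →
      ∀ G : ℝ → ℂ, ContinuousOn G (Icc 0 1) →
        (∀ t ∈ Icc (0:ℝ) 1,
          (G t) ^ 4 =
            (A (α + Complex.exp (-2 * Real.pi * Complex.I * (t : ℂ)) * (x - α)) + lam) /
            (A (α + Complex.exp (-2 * Real.pi * Complex.I * (t : ℂ)) * (x - α)) - lam)) →
        G 0 = H x →
        ((A α = lam → G 1 = Complex.I * H x) ∧
         (A α = -lam → G 1 = -Complex.I * H x))) ∧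
    -- (2) given the rotated branch `Ĥ` (`H(x̂) = ±i H(x)`), the relation
    --     `Q(x) = ±i Q(x̂) σ` and the relation `u⁺(x,h;α,x₂) = ±i u⁻(x̂,h;α,x̂₂)`
    (∀ Hh : ℂ → ℂ,
      ((A α = lam ∧ ∀ x ∈ Ω, Hh x = Complex.I * H x) ∨
       (A α = -lam ∧ ∀ x ∈ Ω, Hh x = -Complex.I * H x)) →
      ((A α = lam → ∀ x ∈ Ω, qMat (H x) = Complex.I • (qMat (Hh x) * sigmaMat)) ∧
       (A α = -lam → ∀ x ∈ Ω, qMat (H x) = (-Complex.I) • (qMat (Hh x) * sigmaMat)) ∧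
       (∀ h : ℝ, 0 < h → ∀ x₂ ∈ Ω, ∀ we wo weh woh : ℂ → ℂ,
         IsWKBSum Ω h 1 sq H x₂ we wo →
         IsWKBSum Ω h (-1) (fun z => -sq z) Hh x₂ weh woh →
         ((A α = lam → ∀ x ∈ Ω,
            wkbPlus h Z H we wo x
              = Complex.I • wkbMinus h (fun z => -Z z) Hh weh woh x) ∧
          (A α = -lam → ∀ x ∈ Ω,
            wkbPlus h Z H we wo x
              = (-Complex.I) • wkbMinus h (fun z => -Z z) Hh weh woh x))))) := by
  have hAα : A α ≠ 0 := fun hc => hsimple (by rw [hc, zero_mul])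
  have hlam : lam ≠ 0 := by
    intro hc
    apply hAα
    rw [hc] at hzero
    simpa [pow_eq_zero_iff] using hzero
  have hlamne : lam ≠ -lam := by
    intro hc
    exact hlam (add_self_eq_zero.1 (by linear_combination hc))
  have hnum : ∀ x ∈ Ω, A x + lam ≠ 0 ∧ A x - lam ≠ 0 := by
    intro x hx
    have hxα : x ≠ α := fun hc => hαΩ (hc ▸ hx)
    have h1 := hnv x (hΩU hx) hxα
    have hfact : A x ^ 2 - lam ^ 2 = (A x - lam) * (A x + lam) := by ring
    rw [hfact] at h1
    exact ⟨right_ne_zero_of_mul h1, left_ne_zero_of_mul h1⟩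
  constructor
  · -- part (1): monodromy of the branch H along the loop around α
    intro x hxΩ hxα hcbU G hGcont hG4 hG0
    have hr : (0:ℝ) < dist x α := dist_pos.2 hxα
    obtain ⟨ε, hεpos, hthick⟩ :=
      (isCompact_closedBall α (dist x α)).exists_cthickening_subset_open hUopen hcbU
    set R : ℝ := ε + dist x α with hRdef
    have hrR : dist x α < R := by rw [hRdef]; linarith
    set W := Metric.ball α R with hWdef
    have hWo : IsOpen W := Metric.isOpen_ball
    have hαW : α ∈ W := by
      rw [hWdef]; exact Metric.mem_ball_self (by positivity)
    have hWU : W ⊆ U := by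
      intro y hy
      apply hthick
      rw [cthickening_closedBall hεpos.le dist_nonneg]
      exact Metric.ball_subset_closedBall hy
    have hfac : ∀ y ∈ W, y ≠ α → (A y - lam) ≠ 0 ∧ (A y + lam) ≠ 0 := by
      intro y hy hyα
      have h1 := hnv y (hWU hy) hyα
      have hfact : A y ^ 2 - lam ^ 2 = (A y - lam) * (A y + lam) := by ring
      rw [hfact] at h1
      exact ⟨left_ne_zero_of_mul h1, right_ne_zero_of_mul h1⟩
    have hAd : DifferentiableOn ℂ A W := fun y hy =>
      ((hA y (hWU hy)).differentiableAt).differentiableWithinAt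
    set f₁ : ℂ → ℂ := fun y => A y + A α with hf₁def
    set B : ℂ → ℂ := dslope (fun y => A y - A α) α with hBdef
    have hf₁d : DifferentiableOn ℂ f₁ W := fun y hy =>
      ((hAd y hy).add_const _)
    have hBd : DifferentiableOn ℂ B W := by
      rw [hBdef]
      exact (Complex.differentiableOn_dslope (hWo.mem_nhds hαW)).2
        (fun y hy => (hAd y hy).sub_const _)
    have hBval : ∀ y, y ≠ α → B y = (A y - A α) / (y - α) := by
      intro y hyα
      rw [hBdef, dslope_of_ne _ hyα, slope_def_field]
      ring
    have hBα : B α = deriv A α := by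
      rw [hBdef, dslope_same]
      exact deriv_sub_const _
    have hderivAα : deriv A α ≠ 0 := right_ne_zero_of_mul hsimple
    have hAA : A α = lam ∨ A α = -lam := by
      have hz : (A α - lam) * (A α + lam) = 0 := by linear_combination hzero
      rcases mul_eq_zero.1 hz with h | h
      · exact Or.inl (by linear_combination h)
      · exact Or.inr (by linear_combination h)
    have hkeyfac : ∀ y, y ≠ α → A y - A α = (y - α) * B y := by
      intro y hyα
      rw [hBval y hyα]
      field_simp [sub_ne_zero.2 hyα]
    have hB0 : ∀ y ∈ W, B y ≠ 0 := by
      intro y hy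
      by_cases hyα : y = α
      · rw [hyα, hBα]; exact hderivAα
      · rw [hBval y hyα]
        apply div_ne_zero _ (sub_ne_zero.2 hyα)
        rcases hAA with hμ | hμ
        · rw [hμ]; exact (hfac y hy hyα).1
        · rw [hμ, sub_neg_eq_add]; exact (hfac y hy hyα).2
    have hf₁0 : ∀ y ∈ W, f₁ y ≠ 0 := by
      intro y hy
      by_cases hyα : y = α
      · rw [hyα]
        intro hc
        exact hAα (by linear_combination hc / 2)
      · rcases hAA with hμ | hμ
        · show A y + A α ≠ 0
          rw [hμ]; exact (hfac y hy hyα).2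
        · show A y + A α ≠ 0
          rw [hμ, ← sub_eq_add_neg]; exact (hfac y hy hyα).1
    obtain ⟨L₁, hL₁c, hL₁⟩ := exists_log_on_ball hf₁d hf₁0
    obtain ⟨L₂, hL₂c, hL₂⟩ := exists_log_on_ball hBd hB0
    have hxαne : x - α ≠ 0 := sub_ne_zero.2 hxα
    -- the loop
    set γ : ℝ → ℂ :=
      fun t => α + Complex.exp (-2 * Real.pi * Complex.I * (t:ℂ)) * (x - α) with hγdef
    have hG4' : ∀ t ∈ Icc (0:ℝ) 1,
        G t ^ 4 = (A (γ t) + lam) / (A (γ t) - lam) := fun t ht => hG4 t ht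
    have hγcont : Continuous γ := by
      apply continuous_const.add
      apply Continuous.mul _ continuous_const
      apply Complex.continuous_exp.comp
      fun_prop
    have hEabs : ∀ t : ℝ, ‖Complex.exp (-2 * Real.pi * Complex.I * (t:ℂ))‖ = 1 := by
      intro t
      rw [Complex.norm_exp]
      have : (-2 * (Real.pi:ℂ) * Complex.I * (t:ℂ)).re = 0 := by
        simp [Complex.mul_re, Complex.mul_im]
      rw [this, Real.exp_zero]
    have hγdist : ∀ t : ℝ, dist (γ t) α = dist x α := by
      intro t
      rw [hγdef]
      simp only
      rw [Complex.dist_eq, add_sub_cancel_left, norm_mul, hEabs, one_mul,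
        ← Complex.dist_eq]
    have hγW : ∀ t : ℝ, γ t ∈ W := by
      intro t
      rw [hWdef, Metric.mem_ball, hγdist]
      exact hrR
    have hγα : ∀ t : ℝ, γ t ≠ α := by
      intro t hc
      have := hγdist t
      rw [hc, dist_self] at this
      exact hr.ne this
    have hγ0 : γ 0 = x := by
      rw [hγdef]; simp
    have hγ1 : γ 1 = x := by
      have hexp1 : Complex.exp (-2 * Real.pi * Complex.I * ((1:ℝ):ℂ)) = 1 := by
        have h := Complex.exp_int_mul_two_pi_mul_I (-1)
        rw [show (-2 * (Real.pi:ℂ) * Complex.I * ((1:ℝ):ℂ)) = ((-1 : ℤ) : ℂ) * (2 * Real.pi * Complex.I) by push_cast; ring]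
        exact h
      rw [hγdef]
      simp only [hexp1, one_mul]
      ring
    have hFne : ∀ t : ℝ, (A (γ t) + lam) / (A (γ t) - lam) ≠ 0 :=
      fun t => div_ne_zero (hfac (γ t) (hγW t) (hγα t)).2 (hfac (γ t) (hγW t) (hγα t)).1
    have hEinv : ∀ t : ℝ, Complex.exp (2 * Real.pi * (t:ℂ) * Complex.I) *
        Complex.exp (-2 * Real.pi * Complex.I * (t:ℂ)) = 1 := by
      intro t
      rw [← Complex.exp_add,
        show 2 * (Real.pi:ℂ) * (t:ℂ) * Complex.I + -2 * Real.pi * Complex.I * (t:ℂ) = 0 by ring,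
        Complex.exp_zero]
    have hγsub : ∀ t : ℝ, γ t - α = Complex.exp (-2 * Real.pi * Complex.I * (t:ℂ)) * (x - α) := by
      intro t
      rw [hγdef]; ring
    -- a reusable endgame
    have endgame : ∀ G₀ : ℝ → ℂ, ContinuousOn G₀ (Icc 0 1) → (∀ t, G₀ t ≠ 0) →
        (∀ t ∈ Icc (0:ℝ) 1, G₀ t ^ 4 = (A (γ t) + lam) / (A (γ t) - lam)) →
        ∀ κ : ℂ, G₀ 1 = κ * G₀ 0 → G 1 = κ * H x := by
      intro G₀ hG₀c hG₀ne hG₀4 κ hκ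
      have hρc : ContinuousOn (fun t => G t / G₀ t) (Icc 0 1) :=
        hGcont.div hG₀c (fun t _ => hG₀ne t)
      have hρ4 : ∀ t ∈ Icc (0:ℝ) 1, (G t / G₀ t) ^ 4 = 1 := by
        intro t ht
        rw [div_pow, hG4' t ht, hG₀4 t ht, div_self (hFne t)]
      have hρconst := fourthRoots_path_const hρc hρ4
      have h1 : G 1 * G₀ 0 = G 0 * G₀ 1 :=
        (div_eq_div_iff (hG₀ne 1) (hG₀ne 0)).1 hρconst
      rw [hκ] at h1
      have h2 : G 1 * G₀ 0 = κ * G 0 * G₀ 0 := by rw [h1]; ring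
      have h3 : G 1 = κ * G 0 := mul_right_cancel₀ (hG₀ne 0) h2
      rw [h3, hG0]
    rcases hAA with hμ | hμ
    · -- case A α = lam
      refine ⟨fun _ => ?_, fun hcon => absurd (hμ.symm.trans hcon) hlamne⟩
      set G₀ : ℝ → ℂ := fun t => Complex.exp ((Real.pi:ℂ) / 2 * (t:ℂ) * Complex.I +
        (L₁ (γ t) - L₂ (γ t) - Complex.log (x - α)) / 4) with hG₀def
      have hG₀ne : ∀ t, G₀ t ≠ 0 := fun t => Complex.exp_ne_zero _
      have hG₀c : ContinuousOn G₀ (Icc 0 1) := by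
        apply Complex.continuous_exp.comp_continuousOn
        apply ContinuousOn.add
        · fun_prop
        · apply ContinuousOn.div_const
          apply ContinuousOn.sub
          · exact (hL₁c.comp hγcont.continuousOn (fun t _ => hγW t)).sub
              (hL₂c.comp hγcont.continuousOn (fun t _ => hγW t))
          · exact continuousOn_const
      have hG₀4 : ∀ t ∈ Icc (0:ℝ) 1, G₀ t ^ 4 = (A (γ t) + lam) / (A (γ t) - lam) := by
        intro t _
        have h4 : G₀ t ^ 4 = Complex.exp (2 * Real.pi * (t:ℂ) * Complex.I +
            (L₁ (γ t) - L₂ (γ t) - Complex.log (x - α))) := by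
          rw [hG₀def, ← Complex.exp_nat_mul]
          congr 1
          push_cast
          ring
        rw [h4, Complex.exp_add, Complex.exp_sub, Complex.exp_sub,
          hL₁ (γ t) (hγW t), hL₂ (γ t) (hγW t), Complex.exp_log hxαne]
        have hAplus : A (γ t) + lam = f₁ (γ t) := by
          show A (γ t) + lam = A (γ t) + A α
          rw [hμ]
        have hAminus : A (γ t) - lam =
            Complex.exp (-2 * Real.pi * Complex.I * (t:ℂ)) * (x - α) * B (γ t) := by
          have hk := hkeyfac (γ t) (hγα t)
          rw [hμ] at hk
          rw [hk, hγsub t]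
        rw [hAplus, hAminus]
        have hBne := hB0 (γ t) (hγW t)
        have hEne : Complex.exp (-2 * Real.pi * Complex.I * (t:ℂ)) ≠ 0 :=
          Complex.exp_ne_zero _
        rw [div_div, ← mul_div_assoc,
          div_eq_div_iff (mul_ne_zero hBne hxαne)
            (mul_ne_zero (mul_ne_zero hEne hxαne) hBne)]
        linear_combination (f₁ (γ t) * (x - α) * B (γ t)) * hEinv t
      have hratio : G₀ 1 = Complex.I * G₀ 0 := by
        have hexpI : Complex.exp ((Real.pi:ℂ) / 2 * ((1:ℝ):ℂ) * Complex.I) = Complex.I := by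
          rw [show (Real.pi:ℂ) / 2 * ((1:ℝ):ℂ) * Complex.I = ((Real.pi:ℂ) / 2) * Complex.I by push_cast; ring,
            Complex.exp_mul_I, Complex.cos_pi_div_two, Complex.sin_pi_div_two]
          ring
        rw [hG₀def]
        simp only
        rw [hγ1, hγ0, Complex.exp_add, Complex.exp_add, hexpI,
          show (Real.pi:ℂ) / 2 * ((0:ℝ):ℂ) * Complex.I = 0 by push_cast; ring,
          Complex.exp_zero, one_mul]
      exact endgame G₀ hG₀c hG₀ne hG₀4 Complex.I hratio
    · -- case A α = -lam
      refine ⟨fun hcon => absurd (hcon.symm.trans hμ) hlamne, fun _ => ?_⟩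
      set G₀ : ℝ → ℂ := fun t => Complex.exp (-((Real.pi:ℂ) / 2 * (t:ℂ) * Complex.I) +
        (L₂ (γ t) + Complex.log (x - α) - L₁ (γ t)) / 4) with hG₀def
      have hG₀ne : ∀ t, G₀ t ≠ 0 := fun t => Complex.exp_ne_zero _
      have hG₀c : ContinuousOn G₀ (Icc 0 1) := by
        apply Complex.continuous_exp.comp_continuousOn
        apply ContinuousOn.add
        · fun_prop
        · apply ContinuousOn.div_const
          apply ContinuousOn.sub
          · exact (hL₂c.comp hγcont.continuousOn (fun t _ => hγW t)).add
              continuousOn_const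
          · exact hL₁c.comp hγcont.continuousOn (fun t _ => hγW t)
      have hG₀4 : ∀ t ∈ Icc (0:ℝ) 1, G₀ t ^ 4 = (A (γ t) + lam) / (A (γ t) - lam) := by
        intro t _
        have h4 : G₀ t ^ 4 = Complex.exp (-2 * Real.pi * Complex.I * (t:ℂ) +
            (L₂ (γ t) + Complex.log (x - α) - L₁ (γ t))) := by
          rw [hG₀def, ← Complex.exp_nat_mul]
          congr 1
          push_cast
          ring
        rw [h4, Complex.exp_add, Complex.exp_sub, Complex.exp_add,
          hL₁ (γ t) (hγW t), hL₂ (γ t) (hγW t), Complex.exp_log hxαne]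
        have hAminus : A (γ t) - lam = f₁ (γ t) := by
          show A (γ t) - lam = A (γ t) + A α
          rw [hμ]; ring
        have hAplus : A (γ t) + lam =
            Complex.exp (-2 * Real.pi * Complex.I * (t:ℂ)) * (x - α) * B (γ t) := by
          have hk := hkeyfac (γ t) (hγα t)
          rw [hμ] at hk
          rw [sub_neg_eq_add] at hk
          rw [hk, hγsub t]
        rw [hAplus, hAminus]
        ring
      have hratio : G₀ 1 = -Complex.I * G₀ 0 := by
        have hexpI : Complex.exp (-((Real.pi:ℂ) / 2 * ((1:ℝ):ℂ) * Complex.I)) = -Complex.I := by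
          rw [show -((Real.pi:ℂ) / 2 * ((1:ℝ):ℂ) * Complex.I) = (-((Real.pi:ℂ) / 2)) * Complex.I by push_cast; ring,
            Complex.exp_mul_I, Complex.cos_neg, Complex.sin_neg,
            Complex.cos_pi_div_two, Complex.sin_pi_div_two]
          ring
        rw [hG₀def]
        simp only
        rw [hγ1, hγ0, Complex.exp_add, Complex.exp_add, hexpI,
          show -((Real.pi:ℂ) / 2 * ((0:ℝ):ℂ) * Complex.I) = 0 by push_cast; ring,
          Complex.exp_zero, one_mul]
      exact endgame G₀ hG₀c hG₀ne hG₀4 (-Complex.I) hratio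
  · -- part (2)
    intro Hh hHh
    -- unified form of the rotated branch
    obtain ⟨κ, hκ0, hHhκ⟩ : ∃ κ : ℂ, κ ≠ 0 ∧ ∀ x ∈ Ω, Hh x = κ * H x := by
      rcases hHh with ⟨-, h⟩ | ⟨-, h⟩
      · exact ⟨Complex.I, Complex.I_ne_zero, h⟩
      · exact ⟨-Complex.I, neg_ne_zero.2 Complex.I_ne_zero, fun x hx => by
          rw [h x hx]⟩
    -- the series of the rotated solution coincide with the original ones
    have hseries : ∀ h : ℝ, 0 < h → ∀ x₂, x₂ ∈ Ω → ∀ we wo weh woh : ℂ → ℂ,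
        IsWKBSum Ω h 1 sq H x₂ we wo →
        IsWKBSum Ω h (-1) (fun z => -sq z) Hh x₂ weh woh →
        ∀ x ∈ Ω, weh x = we x ∧ woh x = wo x := by
      intro h hpos x₂ hx₂ we wo weh woh hwkb hwkbh
      obtain ⟨hwe0, hwo0, hde⟩ := hwkb
      obtain ⟨hweh0, hwoh0, hdeh⟩ := hwkbh
      set cH : ℂ → ℂ := fun x => deriv H x / H x with hcH
      set e : ℂ → ℂ := fun x => 2 * sq x / (h:ℂ) with he
      set φ : ℂ → ℂ := fun y => (A y + lam) / (A y - lam) with hφ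
      have hφa : AnalyticOnNhd ℂ φ Ω := by
        intro x hx
        exact (((hA x (hΩU hx)).add analyticAt_const).div
          ((hA x (hΩU hx)).sub analyticAt_const) (hnum x hx).2)
      have hφc : ContinuousOn φ Ω := hφa.continuousOn
      have hφd : ContinuousOn (deriv φ) Ω := (hφa.deriv).continuousOn
      have hφ0 : ∀ x ∈ Ω, φ x ≠ 0 := fun x hx =>
        div_ne_zero (hnum x hx).1 (hnum x hx).2
      set b : ℂ → ℝ := fun x => ‖deriv φ x / (4 * φ x)‖ + ‖e x‖ with hb
      have hbc : ContinuousOn b Ω := by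
        apply ContinuousOn.add
        · exact (hφd.div (continuousOn_const.mul hφc) (fun x hx =>
            mul_ne_zero (by norm_num) (hφ0 x hx))).norm
        · exact ((continuousOn_const.mul hsqc).div_const _).norm
      have hcb : ∀ x ∈ Ω, ‖cH x‖ ≤ b x := by
        intro x hx
        by_cases hdiff : DifferentiableAt ℂ H x
        · have hev : (fun y => H y ^ 4) =ᶠ[nhds x] φ := by
            filter_upwards [hΩopen.mem_nhds hx] with y hy
            exact (hH y hy).2
          have hd4 : HasDerivAt (fun y => H y ^ 4)
              ((4:ℕ) * H x ^ (4-1) * deriv H x) x := hdiff.hasDerivAt.pow 4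
          have hφderiv : deriv φ x = 4 * H x ^ 3 * deriv H x := by
            rw [← hev.deriv_eq, hd4.deriv]
            norm_num
          have hφval : φ x = H x ^ 4 := ((hH x hx).2).symm
          have hkey : cH x = deriv φ x / (4 * φ x) := by
            rw [hcH, hφderiv, hφval]
            have hHx := (hH x hx).1
            field_simp
          rw [hkey]
          exact le_add_of_nonneg_right (norm_nonneg _)
        · have : deriv H x = 0 := deriv_zero_of_not_differentiableAt hdiff
          rw [hcH]
          simp only [this, zero_div, norm_zero]
          positivity
      have heb : ∀ x ∈ Ω, ‖e x‖ ≤ b x := fun x hx =>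
        le_add_of_nonneg_left (norm_nonneg _)
      have hceq : ∀ x ∈ Ω, deriv Hh x / Hh x = cH x := by
        intro x hx
        have hev : Hh =ᶠ[nhds x] fun y => κ * H y := by
          filter_upwards [hΩopen.mem_nhds hx] with y hy
          exact hHhκ y hy
        rw [hev.deriv_eq, deriv_const_mul_field, hHhκ x hx,
          mul_div_mul_left _ _ hκ0]
      set u : ℂ → ℂ := fun x => we x - weh x with hu
      set v : ℂ → ℂ := fun x => wo x - woh x with hv
      have hud : ∀ x ∈ Ω, HasDerivAt u (cH x * v x) x := by
        intro x hx
        have h1 := (hde x hx).1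
        have h2 := (hdeh x hx).1
        rw [hceq x hx] at h2
        have := h1.sub h2
        refine this.congr_deriv ?_
        simp only [hv, hcH]
        ring
      have hvd : ∀ x ∈ Ω, HasDerivAt v (cH x * u x - e x * v x) x := by
        intro x hx
        have h1 := (hde x hx).2
        have h2 := (hdeh x hx).2
        rw [hceq x hx] at h2
        have := h1.sub h2
        refine this.congr_deriv ?_
        simp only [hu, hv, hcH, he]
        ring
      have := ode_zero Ω hΩopen hΩconn cH e b hbc hcb heb u v hud hvd x₂ hx₂
        (by simp [hu, hwe0, hweh0]) (by simp [hv, hwo0, hwoh0])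
      intro x hx
      obtain ⟨h1, h2⟩ := this x hx
      constructor
      · have := sub_eq_zero.1 h1; exact this.symm
      · have := sub_eq_zero.1 h2; exact this.symm
    refine ⟨?_, ?_, ?_⟩
    · -- Q relation, case A α = lam
      intro hAeq x hx
      rcases hHh with ⟨-, hHhI⟩ | ⟨hc, -⟩
      · rw [hHhI x hx]
        exact qmat_rot_aux (H x)
      · exact absurd (hAeq.symm.trans hc) hlamne
    · -- Q relation, case A α = -lam
      intro hAeq x hx
      rcases hHh with ⟨hc, -⟩ | ⟨-, hHhI⟩
      · exact absurd (hc.symm.trans hAeq) hlamne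
      · rw [hHhI x hx]
        exact qmat_rot_aux2 (H x)
    · -- the solutions
      intro h hpos x₂ hx₂ we wo weh woh hwkb hwkbh
      have hser := hseries h hpos x₂ hx₂ we wo weh woh hwkb hwkbh
      constructor
      · intro hAeq x hx
        rcases hHh with ⟨-, hHhI⟩ | ⟨hc, -⟩
        · obtain ⟨hwe, hwo⟩ := hser x hx
          have : (Complex.I : ℂ) • wkbMinus h (fun z => -Z z) Hh weh woh x =
              (Complex.I * (wkbMinus h (fun z => -Z z) Hh weh woh x).1,
               Complex.I * (wkbMinus h (fun z => -Z z) Hh weh woh x).2) := rfl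
          rw [this]
          simp only [wkbPlus, wkbMinus, hwe, hwo, hHhI x hx, neg_neg]
          exact Prod.ext (wkb_alg_fst _ _ _ _) (wkb_alg_snd _ _ _ _)
        · exact absurd (hAeq.symm.trans hc) hlamne
      · intro hAeq x hx
        rcases hHh with ⟨hc, -⟩ | ⟨-, hHhI⟩
        · exact absurd (hc.symm.trans hAeq) hlamne
        · obtain ⟨hwe, hwo⟩ := hser x hx
          have : ((-Complex.I : ℂ)) • wkbMinus h (fun z => -Z z) Hh weh woh x =
              (-Complex.I * (wkbMinus h (fun z => -Z z) Hh weh woh x).1,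
               -Complex.I * (wkbMinus h (fun z => -Z z) Hh weh woh x).2) := rfl
          rw [this]
          simp only [wkbPlus, wkbMinus, hwe, hwo, hHhI x hx, neg_neg]
          exact Prod.ext (wkb_alg_fst' _ _ _ _) (wkb_alg_snd' _ _ _ _)

end
end

section
/- Assume (A2) with the second symmetry, i.e. conj(A_ε(−conj(x))) = −A_ε(x). Let u^±(x,h,ε;γ,x₀) be the exact WKB solutions of L_ε u = λu and v^±(x,h,ε;γ,x₀) the exact WKB solutions of L_ε v = conj(λ)v. Then u^±(x,h,ε;γ,x₀) = ±[[0,−1],[1,0]] · conj(v^∓(−conj(x), h, ε; −conj(γ), −conj(x₀))). -/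
/-!
STATEMENT 16 (Lemma 4.3, second symmetry).

Assume `conj(A_ε(-conj x)) = -A_ε(x)`. Let `u^±` be the exact WKB solutions of
`L_ε u = λu` and `v^±` those of `L_ε v = conj(λ) v`, with compatible branches:
`conj(z_v(-conj x)) = -z(x)` and `conj(H_v(-conj x)) = H(x)⁻¹`, and with series base
points `x₀` and `-conj x₀`. Then
`u^±(x,h,ε;γ,x₀) = ±[[0,-1],[1,0]] conj(v^∓(-conj x,h,ε;-conj γ,-conj x₀))`.
-/

open Complex Set

noncomputable section

/-- Auxiliary: chain rule for `x ↦ conj (f (-(conj x)))`. -/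
private lemma conjneg_hasDerivAt {f : ℂ → ℂ} {d b : ℂ}
    (hf : HasDerivAt f d (-(starRingEnd ℂ) b)) :
    HasDerivAt (fun x => (starRingEnd ℂ) (f (-(starRingEnd ℂ) x)))
      (-(starRingEnd ℂ) d) b := by
  rw [hasDerivAt_iff_isLittleO] at hf ⊢
  rw [Asymptotics.isLittleO_iff] at hf ⊢
  intro c hc
  have hcont : Continuous fun x : ℂ => -(starRingEnd ℂ) x :=
    Complex.continuous_conj.neg
  have ht : Filter.Tendsto (fun x : ℂ => -(starRingEnd ℂ) x) (nhds b)
      (nhds (-(starRingEnd ℂ) b)) := hcont.tendsto b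
  filter_upwards [ht.eventually (hf hc)] with x hx
  have key : (starRingEnd ℂ) (f (-(starRingEnd ℂ) x)) -
      (starRingEnd ℂ) (f (-(starRingEnd ℂ) b)) - (x - b) • (-(starRingEnd ℂ) d)
      = (starRingEnd ℂ) (f (-(starRingEnd ℂ) x) - f (-(starRingEnd ℂ) b)
          - (-(starRingEnd ℂ) x - -(starRingEnd ℂ) b) • d) := by
    simp only [smul_eq_mul, map_sub, map_mul, map_neg, Complex.conj_conj]
    ring
  have hn : ‖-(starRingEnd ℂ) x - -(starRingEnd ℂ) b‖ = ‖x - b‖ := by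
    have : -(starRingEnd ℂ) x - -(starRingEnd ℂ) b = (starRingEnd ℂ) (b - x) := by
      simp [map_sub]; ring
    rw [this, RCLike.norm_conj, norm_sub_rev]
  rw [key, RCLike.norm_conj, ← hn]
  exact hx

/-- Auxiliary: a function with zero derivative on an open preconnected set is constant. -/
private lemma const_of_hasDerivAt_zero {Ω : Set ℂ} (hΩopen : IsOpen Ω)
    (hΩconn : IsPreconnected Ω) {f : ℂ → ℂ} (hf : ∀ x ∈ Ω, HasDerivAt f 0 x)
    {x₀ : ℂ} (hx₀ : x₀ ∈ Ω) : ∀ x ∈ Ω, f x = f x₀ := by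
  have hdiff : DifferentiableOn ℂ f Ω := fun x hx =>
    (hf x hx).differentiableAt.differentiableWithinAt
  have hanal : AnalyticOnNhd ℂ f Ω := hdiff.analyticOnNhd hΩopen
  have hconst : AnalyticOnNhd ℂ (fun _ : ℂ => f x₀) Ω := analyticOnNhd_const
  obtain ⟨r, hr, hball⟩ := Metric.isOpen_iff.1 hΩopen x₀ hx₀
  have hev : f =ᶠ[nhds x₀] fun _ => f x₀ := by
    filter_upwards [Metric.ball_mem_nhds x₀ hr] with y hy
    refine (convex_ball x₀ r).is_const_of_fderivWithin_eq_zero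
      (fun z hz => ((hf z (hball hz)).differentiableAt).differentiableWithinAt)
      (fun z hz => ?_) hy (Metric.mem_ball_self hr)
    rw [fderivWithin_eq_fderiv ((Metric.isOpen_ball).uniqueDiffOn z hz)
      (hf z (hball hz)).differentiableAt, (hf z (hball hz)).hasFDerivAt.fderiv]
    ext
    simp
  exact fun x hx => hanal.eqOn_of_preconnected_of_eventuallyEq hconst hΩconn hx₀ hev hx

/-- Uniqueness of exact WKB series, proved via constant "Wronskian" invariants. -/
private lemma wkb_unique {Ω : Set ℂ} (hΩopen : IsOpen Ω) (hΩconn : IsPreconnected Ω)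
    {h : ℝ} {s : ℂ} {sq H Z : ℂ → ℂ} (hZ : ∀ x ∈ Ω, HasDerivAt Z (sq x) x)
    {x₀ : ℂ} (hx₀ : x₀ ∈ Ω) {we wo ge go wem wom : ℂ → ℂ}
    (h1 : IsWKBSum Ω h s sq H x₀ we wo)
    (h2 : IsWKBSum Ω h s sq H x₀ ge go)
    (h3 : IsWKBSum Ω h (-s) sq H x₀ wem wom) :
    ∀ x ∈ Ω, ge x = we x ∧ go x = wo x := by
  obtain ⟨hwe0, hwo0, hw⟩ := h1
  obtain ⟨hge0, hgo0, hg⟩ := h2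
  obtain ⟨hme0, hmo0, hm⟩ := h3
  have hU1 : ∀ x ∈ Ω, we x * wem x - wo x * wom x = 1 := by
    have hd : ∀ x ∈ Ω, HasDerivAt (fun x => we x * wem x - wo x * wom x) 0 x := by
      intro x hx
      have := ((hw x hx).1.mul (hm x hx).1).sub ((hw x hx).2.mul (hm x hx).2)
      exact this.congr_deriv (by ring)
    intro x hx
    rw [const_of_hasDerivAt_zero hΩopen hΩconn hd hx₀ x hx]
    simp [hwe0, hwo0, hme0, hmo0]
  have hU2 : ∀ x ∈ Ω, ge x * wem x - go x * wom x = 1 := by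
    have hd : ∀ x ∈ Ω, HasDerivAt (fun x => ge x * wem x - go x * wom x) 0 x := by
      intro x hx
      have := ((hg x hx).1.mul (hm x hx).1).sub ((hg x hx).2.mul (hm x hx).2)
      exact this.congr_deriv (by ring)
    intro x hx
    rw [const_of_hasDerivAt_zero hΩopen hΩconn hd hx₀ x hx]
    simp [hge0, hgo0, hme0, hmo0]
  have hW : ∀ x ∈ Ω, we x * go x - wo x * ge x = 0 := by
    have hd : ∀ x ∈ Ω, HasDerivAt
        (fun x => (we x * go x - wo x * ge x) * Complex.exp (s * (2 * Z x) / (h : ℂ))) 0 x := by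
      intro x hx
      have hexp : HasDerivAt (fun x => Complex.exp (s * (2 * Z x) / (h : ℂ)))
          (Complex.exp (s * (2 * Z x) / (h : ℂ)) * (s * (2 * sq x) / (h : ℂ))) x := by
        exact ((((hZ x hx).const_mul 2).const_mul s).div_const (h : ℂ)).cexp
      have := (((hw x hx).1.mul (hg x hx).2).sub ((hw x hx).2.mul (hg x hx).1)).mul hexp
      exact this.congr_deriv (by simp only [Pi.sub_apply, Pi.mul_apply]; ring)
    intro x hx
    have hx0eq := const_of_hasDerivAt_zero hΩopen hΩconn hd hx₀ x hx
    have hzero : (we x * go x - wo x * ge x) * Complex.exp (s * (2 * Z x) / (h : ℂ)) = 0 := by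
      rw [hx0eq, hwe0, hgo0, hwo0, hge0]
      ring
    rcases mul_eq_zero.1 hzero with h' | h'
    · exact h'
    · exact absurd h' (Complex.exp_ne_zero _)
  intro x hx
  have e1 := hU1 x hx
  have e2 := hU2 x hx
  have e3 := hW x hx
  constructor
  · linear_combination (-(ge x)) * e1 + we x * e2 + wom x * e3
  · linear_combination (-(go x)) * e1 + wo x * e2 + wem x * e3

/-- **Lemma 4.3, second case.** -/
theorem wkb_symmetry_second
    (F : ℂ → ℂ)  -- the perturbed potential `A_ε`
    (lam : ℂ) (h : ℝ) (hh : 0 < h)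
    (Ω : Set ℂ) (hΩopen : IsOpen Ω) (hΩconn : IsPreconnected Ω)
    (hΩsym : ∀ x ∈ Ω, -(starRingEnd ℂ) x ∈ Ω)
    -- the symmetry `conj(A_ε(-conj x)) = -A_ε(x)`
    (hFsym : ∀ x ∈ Ω, (starRingEnd ℂ) (F (-(starRingEnd ℂ) x)) = -F x)
    -- branches and phases for the spectral parameter `λ`
    (sq H Z : ℂ → ℂ)
    (hsq : ∀ x ∈ Ω, sq x ^ 2 = F x ^ 2 - lam ^ 2)
    (hH : ∀ x ∈ Ω, H x ≠ 0 ∧ (H x) ^ 4 = (F x + lam) / (F x - lam))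
    (hZ : ∀ x ∈ Ω, HasDerivAt Z (sq x) x)
    -- branches and phases for the spectral parameter `conj λ`
    (sqv Hv Zv : ℂ → ℂ)
    (hsqv : ∀ x ∈ Ω, sqv x ^ 2 = F x ^ 2 - ((starRingEnd ℂ) lam) ^ 2)
    (hHv : ∀ x ∈ Ω, Hv x ≠ 0 ∧ (Hv x) ^ 4 =
        (F x + (starRingEnd ℂ) lam) / (F x - (starRingEnd ℂ) lam))
    (hZv : ∀ x ∈ Ω, HasDerivAt Zv (sqv x) x)
    -- compatibility of the branches under the symmetry
    (hsqrel : ∀ x ∈ Ω, (starRingEnd ℂ) (sqv (-(starRingEnd ℂ) x)) = sq x)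
    (hZrel : ∀ x ∈ Ω, (starRingEnd ℂ) (Zv (-(starRingEnd ℂ) x)) = -Z x)
    (hHrel : ∀ x ∈ Ω, (starRingEnd ℂ) (Hv (-(starRingEnd ℂ) x)) = (H x)⁻¹)
    -- base points
    (γ x₀ : ℂ) (hγ : γ ∈ Ω) (hx₀ : x₀ ∈ Ω) (hZγ : Z γ = 0)
    (hZvγ : Zv (-(starRingEnd ℂ) γ) = 0)
    -- the WKB series: `u⁺` pairs with `v⁻`, `u⁻` pairs with `v⁺`
    (we wo wem wom vwe vwo vwep vwop : ℂ → ℂ)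
    (hwP : IsWKBSum Ω h 1 sq H x₀ we wo)
    (hwM : IsWKBSum Ω h (-1) sq H x₀ wem wom)
    (hvM : IsWKBSum Ω h (-1) sqv Hv (-(starRingEnd ℂ) x₀) vwe vwo)
    (hvP : IsWKBSum Ω h 1 sqv Hv (-(starRingEnd ℂ) x₀) vwep vwop) :
    ∀ x ∈ Ω,
      -- `u⁺(x) = [[0,-1],[1,0]] conj (v⁻(-conj x))`
      ((wkbPlus h Z H we wo x).1
          = -(starRingEnd ℂ) ((wkbMinus h Zv Hv vwe vwo (-(starRingEnd ℂ) x)).2) ∧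
       (wkbPlus h Z H we wo x).2
          = (starRingEnd ℂ) ((wkbMinus h Zv Hv vwe vwo (-(starRingEnd ℂ) x)).1)) ∧
      -- `u⁻(x) = -[[0,-1],[1,0]] conj (v⁺(-conj x))`
      ((wkbMinus h Z H wem wom x).1
          = (starRingEnd ℂ) ((wkbPlus h Zv Hv vwep vwop (-(starRingEnd ℂ) x)).2) ∧
       (wkbMinus h Z H wem wom x).2
          = -(starRingEnd ℂ) ((wkbPlus h Zv Hv vwep vwop (-(starRingEnd ℂ) x)).1)) := by
  have hτΩ : ∀ x ∈ Ω, -(starRingEnd ℂ) x ∈ Ω := hΩsym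
  have hττ : ∀ x : ℂ, -(starRingEnd ℂ) (-(starRingEnd ℂ) x) = x := by intro x; simp
  have hHveq : ∀ y ∈ Ω, Hv y = (starRingEnd ℂ) ((H (-(starRingEnd ℂ) y))⁻¹) := by
    intro y hy
    have h1 := hHrel (-(starRingEnd ℂ) y) (hτΩ y hy)
    rw [hττ] at h1
    rw [← h1, Complex.conj_conj]
  have hHeq : ∀ x ∈ Ω, H x = (starRingEnd ℂ) ((Hv (-(starRingEnd ℂ) x))⁻¹) := by
    intro x hx
    rw [map_inv₀, hHrel x hx, inv_inv]
  have hc : ∀ x ∈ Ω,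
      (starRingEnd ℂ) (deriv Hv (-(starRingEnd ℂ) x) / Hv (-(starRingEnd ℂ) x))
        = deriv H x / H x := by
    intro x hx
    by_cases hd : DifferentiableAt ℂ H x
    · have h1 : HasDerivAt (fun w => (H w)⁻¹) (-(deriv H x) / (H x) ^ 2) x :=
        hd.hasDerivAt.inv (hH x hx).1
      have h2 : HasDerivAt (fun y => (starRingEnd ℂ) ((H (-(starRingEnd ℂ) y))⁻¹))
          (-(starRingEnd ℂ) (-(deriv H x) / (H x) ^ 2)) (-(starRingEnd ℂ) x) := by
        refine conjneg_hasDerivAt (f := fun w => (H w)⁻¹) ?_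
        rw [hττ]
        exact h1
      have h3 : HasDerivAt Hv (-(starRingEnd ℂ) (-(deriv H x) / (H x) ^ 2))
          (-(starRingEnd ℂ) x) := by
        apply h2.congr_of_eventuallyEq
        filter_upwards [hΩopen.mem_nhds (hτΩ x hx)] with y hy
        exact hHveq y hy
      rw [h3.deriv, hHveq (-(starRingEnd ℂ) x) (hτΩ x hx), hττ]
      simp only [map_div₀, map_neg, map_inv₀, Complex.conj_conj, map_pow]
      have hHne := (hH x hx).1
      field_simp
    · have hd' : ¬ DifferentiableAt ℂ Hv (-(starRingEnd ℂ) x) := by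
        intro hdv
        apply hd
        have h1 : HasDerivAt (fun w => (Hv w)⁻¹)
            (-(deriv Hv (-(starRingEnd ℂ) x)) / (Hv (-(starRingEnd ℂ) x)) ^ 2)
            (-(starRingEnd ℂ) x) := hdv.hasDerivAt.inv (hHv _ (hτΩ x hx)).1
        have h2 := conjneg_hasDerivAt (b := x) h1
        have h3 : HasDerivAt H
            (-(starRingEnd ℂ) (-(deriv Hv (-(starRingEnd ℂ) x)) /
              (Hv (-(starRingEnd ℂ) x)) ^ 2)) x := by
          apply h2.congr_of_eventuallyEq
          filter_upwards [hΩopen.mem_nhds hx] with y hy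
          exact hHeq y hy
        exact h3.differentiableAt
      rw [deriv_zero_of_not_differentiableAt hd, deriv_zero_of_not_differentiableAt hd']
      simp
  have hgP : IsWKBSum Ω h 1 sq H x₀
      (fun x => (starRingEnd ℂ) (vwe (-(starRingEnd ℂ) x)))
      (fun x => -(starRingEnd ℂ) (vwo (-(starRingEnd ℂ) x))) := by
    obtain ⟨hv1, hv2, hv⟩ := hvM
    refine ⟨by simp [hv1], by simp [hv2], ?_⟩
    intro x hx
    obtain ⟨hd1, hd2⟩ := hv (-(starRingEnd ℂ) x) (hτΩ x hx)
    constructor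
    · have h1 := conjneg_hasDerivAt (b := x) hd1
      convert h1 using 1
      rw [map_mul, hc x hx]
      ring
    · have h2 := (conjneg_hasDerivAt (b := x) hd2).neg
      refine h2.congr_deriv ?_
      simp only [map_sub, map_mul, map_neg, map_one, map_div₀, map_ofNat,
        Complex.conj_ofReal, hc x hx, hsqrel x hx, neg_neg]
      ring
  have hgM : IsWKBSum Ω h (-1) sq H x₀
      (fun x => (starRingEnd ℂ) (vwep (-(starRingEnd ℂ) x)))
      (fun x => -(starRingEnd ℂ) (vwop (-(starRingEnd ℂ) x))) := by
    obtain ⟨hv1, hv2, hv⟩ := hvP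
    refine ⟨by simp [hv1], by simp [hv2], ?_⟩
    intro x hx
    obtain ⟨hd1, hd2⟩ := hv (-(starRingEnd ℂ) x) (hτΩ x hx)
    constructor
    · have h1 := conjneg_hasDerivAt (b := x) hd1
      convert h1 using 1
      rw [map_mul, hc x hx]
      ring
    · have h2 := (conjneg_hasDerivAt (b := x) hd2).neg
      refine h2.congr_deriv ?_
      simp only [map_sub, map_mul, map_neg, map_one, map_div₀, map_ofNat,
        Complex.conj_ofReal, hc x hx, hsqrel x hx, neg_neg]
      ring
  have hkeyP := wkb_unique hΩopen hΩconn hZ hx₀ hwP hgP hwM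
  have hkeyM := wkb_unique hΩopen hΩconn hZ hx₀ hwM hgM
    (show IsWKBSum Ω h (-(-1)) sq H x₀ we wo by rw [neg_neg]; exact hwP)
  intro x hx
  have e1 : (starRingEnd ℂ) (vwe (-(starRingEnd ℂ) x)) = we x := (hkeyP x hx).1
  have e2 : (starRingEnd ℂ) (vwo (-(starRingEnd ℂ) x)) = -(wo x) := by
    rw [← (hkeyP x hx).2, neg_neg]
  have e3 : (starRingEnd ℂ) (vwep (-(starRingEnd ℂ) x)) = wem x := (hkeyM x hx).1
  have e4 : (starRingEnd ℂ) (vwop (-(starRingEnd ℂ) x)) = -(wom x) := by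
    rw [← (hkeyM x hx).2, neg_neg]
  have eZ : (starRingEnd ℂ) (Zv (-(starRingEnd ℂ) x)) = -Z x := hZrel x hx
  have eH : (starRingEnd ℂ) (Hv (-(starRingEnd ℂ) x)) = (H x)⁻¹ := hHrel x hx
  refine ⟨⟨?_, ?_⟩, ⟨?_, ?_⟩⟩ <;>
  · simp only [wkbPlus, wkbMinus, map_mul, map_add, map_sub, map_neg, map_inv₀,
      map_div₀, Complex.conj_I, Complex.conj_ofReal, ← Complex.exp_conj,
      e1, e2, e3, e4, eZ, eH, inv_inv, neg_neg]
    ring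

end
end
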